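/- arXiv:1208.6229 — 3 statements merged into one kernel-verified Lean document; each statement's English description precedes it below -/
import Mathlib

section
/- For f : ℤⁿ → ℂ define f° : ℤⁿ × 𝕋 → ℂ by f°(x, ξ) = f(x) · conj(ξ), where 𝕋 is the unit circle with normalized Haar (arc-length) measure dη. Then for all absolutely summable f, g : ℤⁿ → ℂ and all (x, ξ) ∈ ℤⁿ × 𝕋: (a) Σ_{y ∈ ℤⁿ} ∫_𝕋 f°(y, η) · g°((y, η)⁻¹ (x, ξ)) dη = (f ♮ g)°(x, ξ), where the group operations on ℤⁿ × 𝕋 are (x, ξ)(y, η) = (x+y, σ(x, y) ξ η) and (x, ξ)⁻¹ = (−x, conj(σ(x, −x) ξ)); (b) (f*)°(x, ξ) = conj(f°((x, ξ)⁻¹)); (c) Σ_{y ∈ ℤⁿ} ∫_𝕋 |f°(y, η)| dη = Σ_{y ∈ ℤⁿ} |f(y)|. Thus f ↦ f° is an isometric *-homomorphism of the twisted convolution algebra ℓ¹(ℤⁿ, θ) into L¹ of this group. -/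
open scoped BigOperators
open Filter Topology

noncomputable section

/-- The cocycle σ(l,m) = ∏_{1 ≤ j < k ≤ n} θ_{k,j}^{l_k m_j}. -/
def coc {n : ℕ} (θ : Fin n → Fin n → ℂ) (l m : Fin n → ℤ) : ℂ :=
  ∏ p ∈ Finset.univ.filter (fun p : Fin n × Fin n => p.1 < p.2), θ p.2 p.1 ^ (l p.2 * m p.1)

/-- Twisted convolution (f ♮ g)(x) = Σ_y f(y) g(x−y) σ(y, x−y). -/
def tconv {n : ℕ} (σ : (Fin n → ℤ) → (Fin n → ℤ) → ℂ) (f g : (Fin n → ℤ) → ℂ) :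
    (Fin n → ℤ) → ℂ :=
  fun x => ∑' y, f y * g (x - y) * σ y (x - y)

/-- δ_y, the indicator of {y}. -/
def delta {n : ℕ} (y : Fin n → ℤ) : (Fin n → ℤ) → ℂ := fun x => if x = y then 1 else 0

/-- The involution f*(x) = conj(σ(x, −x) f(−x)). -/
def tinv {n : ℕ} (σ : (Fin n → ℤ) → (Fin n → ℤ) → ℂ) (f : (Fin n → ℤ) → ℂ) :
    (Fin n → ℤ) → ℂ :=
  fun x => starRingEnd ℂ (σ x (-x) * f (-x))

/-- The multiplication (x,ξ)(y,η) = (x+y, σ(x,y) ξ η) on ℤⁿ × ℂ ⊇ ℤⁿ × 𝕋. -/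
def Gmul {n : ℕ} (σ : (Fin n → ℤ) → (Fin n → ℤ) → ℂ) (a b : (Fin n → ℤ) × ℂ) :
    (Fin n → ℤ) × ℂ :=
  (a.1 + b.1, σ a.1 b.1 * a.2 * b.2)

/-- The inverse (x,ξ)⁻¹ = (−x, conj(σ(x,−x) ξ)). -/
def Ginv {n : ℕ} (σ : (Fin n → ℤ) → (Fin n → ℤ) → ℂ) (a : (Fin n → ℤ) × ℂ) :
    (Fin n → ℤ) × ℂ :=
  (-a.1, starRingEnd ℂ (σ a.1 (-a.1) * a.2))

/-- f°(x, ξ) = f(x) conj(ξ). -/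
def circFn {n : ℕ} (f : (Fin n → ℤ) → ℂ) (a : (Fin n → ℤ) × ℂ) : ℂ :=
  f a.1 * starRingEnd ℂ a.2

lemma expConjMul (t : ℝ) :
    starRingEnd ℂ (Complex.exp (2 * Real.pi * Complex.I * t)) *
      Complex.exp (2 * Real.pi * Complex.I * t) = 1 := by
  rw [← Complex.exp_conj, ← Complex.exp_add, ← Complex.exp_zero]
  congr 1
  simp [map_mul, Complex.conj_I, Complex.conj_ofReal, map_ofNat]

lemma expNorm (t : ℝ) : ‖Complex.exp (2 * Real.pi * Complex.I * t)‖ = 1 := by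
  rw [show (2 * Real.pi * Complex.I * t : ℂ) = ((2 * Real.pi * t : ℝ) : ℂ) * Complex.I by
    push_cast; ring]
  simpa using Complex.norm_exp_ofReal_mul_I (2 * Real.pi * t)

lemma coc_conj_mul {n : ℕ} (θ : Fin n → Fin n → ℂ) (hUnit : ∀ j k, ‖θ j k‖ = 1)
    (y x : Fin n → ℤ) :
    starRingEnd ℂ (coc θ (-y) x) * coc θ y (-y) = coc θ y (x - y) := by
  unfold coc
  rw [map_prod, ← Finset.prod_mul_distrib]
  apply Finset.prod_congr rfl
  intro p _
  have hne : θ p.2 p.1 ≠ 0 := by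
    intro h
    have := hUnit p.2 p.1
    rw [h] at this
    simp at this
  have hconj : starRingEnd ℂ (θ p.2 p.1) = (θ p.2 p.1)⁻¹ := by
    have h1 : θ p.2 p.1 * starRingEnd ℂ (θ p.2 p.1) = 1 := by
      rw [Complex.mul_conj]
      norm_cast
      rw [Complex.normSq_eq_norm_sq, hUnit p.2 p.1]
      norm_num
    exact (inv_eq_of_mul_eq_one_right h1).symm
  rw [map_zpow₀, hconj, inv_zpow, ← zpow_neg, ← zpow_add₀ hne]
  congr 1
  simp only [Pi.neg_apply, Pi.sub_apply]
  ring

/-- f ↦ f° with f°(x,ξ) = f(x) conj(ξ) is an isometric *-homomorphism of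
ℓ¹(ℤⁿ, θ) into L¹(G), where G = ℤⁿ × 𝕋; the Haar integral over 𝕋 is parametrized by
t ↦ e^{2πit}, t ∈ [0,1] (normalized arc-length measure). -/
theorem statement5 {n : ℕ} (θ : Fin n → Fin n → ℂ)
    (hUnit : ∀ j k, ‖θ j k‖ = 1)
    (hHerm : ∀ j k, θ k j = starRingEnd ℂ (θ j k))
    (hDiag : ∀ j, θ j j = 1)
    (f g : (Fin n → ℤ) → ℂ)
    (hf : Summable (fun x => ‖f x‖))
    (hg : Summable (fun x => ‖g x‖)) :
    -- (a) group convolution of f° and g° equals (f ♮ g)°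
    (∀ (x : Fin n → ℤ) (ξ : ℂ), ‖ξ‖ = 1 →
      (∑' y : Fin n → ℤ, ∫ t in (0:ℝ)..1,
          circFn f (y, Complex.exp (2 * Real.pi * Complex.I * t)) *
            circFn g (Gmul (coc θ)
              (Ginv (coc θ) (y, Complex.exp (2 * Real.pi * Complex.I * t))) (x, ξ)))
        = circFn (tconv (coc θ) f g) (x, ξ)) ∧
    -- (b) compatibility with the involution
    (∀ (x : Fin n → ℤ) (ξ : ℂ), ‖ξ‖ = 1 →
      circFn (tinv (coc θ) f) (x, ξ)
        = starRingEnd ℂ (circFn f (Ginv (coc θ) (x, ξ)))) ∧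
    -- (c) isometry of the embedding
    (∑' y : Fin n → ℤ, ∫ t in (0:ℝ)..1,
        ‖circFn f (y, Complex.exp (2 * Real.pi * Complex.I * t))‖)
      = ∑' y : Fin n → ℤ, ‖f y‖ := by
  refine ⟨?_, ?_, ?_⟩
  · -- (a)
    intro x ξ hξ
    have key : ∀ y : Fin n → ℤ,
        (∫ t in (0:ℝ)..1,
          circFn f (y, Complex.exp (2 * Real.pi * Complex.I * t)) *
            circFn g (Gmul (coc θ)
              (Ginv (coc θ) (y, Complex.exp (2 * Real.pi * Complex.I * t))) (x, ξ)))
        = f y * g (x - y) * coc θ y (x - y) * starRingEnd ℂ ξ := by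
      intro y
      have hpt : ∀ t : ℝ,
          circFn f (y, Complex.exp (2 * Real.pi * Complex.I * t)) *
            circFn g (Gmul (coc θ)
              (Ginv (coc θ) (y, Complex.exp (2 * Real.pi * Complex.I * t))) (x, ξ))
          = f y * g (x - y) * coc θ y (x - y) * starRingEnd ℂ ξ := by
        intro t
        set e := Complex.exp (2 * Real.pi * Complex.I * t) with he
        simp only [circFn, Gmul, Ginv, map_mul, Complex.conj_conj]
        rw [show (-y) + x = x - y by abel]
        calc f y * starRingEnd ℂ e *
              (g (x - y) *
                (starRingEnd ℂ (coc θ (-y) x) * (coc θ y (-y) * e) * starRingEnd ℂ ξ))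
            = (starRingEnd ℂ (coc θ (-y) x) * coc θ y (-y)) *
                (starRingEnd ℂ e * e) * (f y * g (x - y) * starRingEnd ℂ ξ) := by ring
          _ = f y * g (x - y) * coc θ y (x - y) * starRingEnd ℂ ξ := by
              rw [coc_conj_mul θ hUnit y x, he, expConjMul t]; ring
      rw [intervalIntegral.integral_congr (g := fun _ =>
        f y * g (x - y) * coc θ y (x - y) * starRingEnd ℂ ξ) (fun t _ => hpt t),
        intervalIntegral.integral_const]
      simp
    calc (∑' y : Fin n → ℤ, ∫ t in (0:ℝ)..1,
          circFn f (y, Complex.exp (2 * Real.pi * Complex.I * t)) *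
            circFn g (Gmul (coc θ)
              (Ginv (coc θ) (y, Complex.exp (2 * Real.pi * Complex.I * t))) (x, ξ)))
        = ∑' y : Fin n → ℤ, f y * g (x - y) * coc θ y (x - y) * starRingEnd ℂ ξ :=
          tsum_congr key
      _ = (∑' y : Fin n → ℤ, f y * g (x - y) * coc θ y (x - y)) * starRingEnd ℂ ξ :=
          tsum_mul_right
      _ = circFn (tconv (coc θ) f g) (x, ξ) := rfl
  · -- (b)
    intro x ξ hξ
    simp only [circFn, tinv, Ginv, map_mul, Complex.conj_conj]
    ring
  · -- (c)
    refine tsum_congr fun y => ?_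
    have hpt : ∀ t : ℝ,
        ‖circFn f (y, Complex.exp (2 * Real.pi * Complex.I * t))‖ = ‖f y‖ := by
      intro t
      simp only [circFn, norm_mul, RCLike.norm_conj, expNorm, mul_one]
    rw [intervalIntegral.integral_congr (g := fun _ => ‖f y‖) (fun t _ => hpt t),
      intervalIntegral.integral_const]
    simp
end
end

section
/- Let v : ℤⁿ → [1,∞) be a submultiplicative symmetric weight that violates the GRS-condition, i.e. there exists x ∈ ℤⁿ with lim_{m→∞} v(mx)^{1/m} > 1. Then ℓ¹_v(ℤⁿ, θ) is not inverse-closed in C*(θ): there exists f ∈ ℓ¹_v(ℤⁿ) such that the operator λ(f) : g ↦ f ♮ g is invertible as a bounded operator on ℓ²(ℤⁿ), but there is no g ∈ ℓ¹_v(ℤⁿ) with f ♮ g = g ♮ f = δ_0. -/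
open scoped BigOperators
open Filter Topology
open scoped ENNReal

noncomputable section

/-- ℓ²(ℤⁿ). -/
abbrev Ltwo (n : ℕ) := lp (fun _ : Fin n → ℤ => ℂ) 2

lemma coc_norm {n : ℕ} (θ : Fin n → Fin n → ℂ) (hUnit : ∀ j k, ‖θ j k‖ = 1)
    (l m : Fin n → ℤ) : ‖coc θ l m‖ = 1 := by
  unfold coc
  rw [norm_prod]
  apply Finset.prod_eq_one
  intro p _
  rw [norm_zpow, hUnit, one_zpow]

lemma coc_zero_left {n : ℕ} (θ : Fin n → Fin n → ℂ) (m : Fin n → ℤ) : coc θ 0 m = 1 := by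
  unfold coc; apply Finset.prod_eq_one; intro p _; simp

lemma root_no_zero {w : ℕ → ℝ} {L c : ℝ} (hw : ∀ m, 1 ≤ w m)
    (hL : Tendsto (fun m : ℕ => (w m) ^ ((m : ℝ)⁻¹)) atTop (𝓝 L))
    (hc : 0 < c) (hcL : 1 < c * L) :
    ¬ Tendsto (fun m : ℕ => c ^ m * w m) atTop (𝓝 0) := by
  intro h0
  have h1 : Tendsto (fun m : ℕ => c * (w m) ^ ((m : ℝ)⁻¹)) atTop (𝓝 (c * L)) :=
    hL.const_mul c
  have hev1 : ∀ᶠ m : ℕ in atTop, 1 < c * (w m) ^ ((m : ℝ)⁻¹) :=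
    h1.eventually (eventually_gt_nhds hcL)
  have hev0 : ∀ᶠ m : ℕ in atTop, c ^ m * w m < 1 :=
    h0.eventually (eventually_lt_nhds one_pos)
  have hev2 : ∀ᶠ m : ℕ in atTop, 1 ≤ m := eventually_ge_atTop 1
  obtain ⟨m, h1m, h0m, hm1⟩ := (hev1.and (hev0.and hev2)).exists
  have hm0 : (m : ℝ) ≠ 0 := by exact_mod_cast Nat.one_le_iff_ne_zero.mp hm1
  have hwm : (0:ℝ) < w m := lt_of_lt_of_le one_pos (hw m)
  have hkey : ((w m) ^ ((m : ℝ)⁻¹)) ^ (m : ℕ) = w m := by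
    rw [← Real.rpow_natCast ((w m) ^ ((m : ℝ)⁻¹)) m, ← Real.rpow_mul hwm.le,
      inv_mul_cancel₀ hm0, Real.rpow_one]
  have hgt : c⁻¹ < (w m) ^ ((m : ℝ)⁻¹) := by
    rw [inv_lt_iff_one_lt_mul₀ hc]
    calc (1:ℝ) < c * w m ^ ((m:ℝ))⁻¹ := h1m
    _ = w m ^ ((m:ℝ))⁻¹ * c := mul_comm _ _
  have hpow : (c⁻¹) ^ (m:ℕ) < w m := by
    calc (c⁻¹) ^ (m:ℕ) < ((w m) ^ ((m : ℝ)⁻¹)) ^ (m:ℕ) :=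
      pow_lt_pow_left₀ hgt (by positivity) (Nat.one_le_iff_ne_zero.mp hm1)
    _ = w m := hkey
  have : (1:ℝ) < c ^ m * w m := by
    have h2 : c ^ m * (c⁻¹) ^ m < c ^ m * w m :=
      mul_lt_mul_of_pos_left hpow (by positivity)
    rwa [← mul_pow, mul_inv_cancel₀ hc.ne', one_pow] at h2
  linarith

lemma tconv_formula {n : ℕ} (θ : Fin n → Fin n → ℂ) (x : Fin n → ℤ) (hx : x ≠ 0) (c : ℂ)
    (h : (Fin n → ℤ) → ℂ) (z : Fin n → ℤ) :
    tconv (coc θ) (fun y => delta 0 y - c * delta x y) h z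
      = h z - c * (coc θ x (z - x) * h (z - x)) := by
  unfold tconv
  rw [tsum_eq_sum (s := ({0, x} : Finset (Fin n → ℤ))) ?_]
  · rw [Finset.sum_pair (Ne.symm hx)]
    simp only [delta]
    rw [if_pos trivial, if_neg (Ne.symm hx), if_neg hx]
    rw [sub_zero, coc_zero_left]
    ring
  · intro b hb
    simp only [Finset.mem_insert, Finset.mem_singleton, not_or] at hb
    simp only [delta, if_neg hb.1, if_neg hb.2]
    ring

lemma two_toReal : (2 : ℝ≥0∞).toReal = 2 := by simp

lemma Umem {n : ℕ} (θ : Fin n → Fin n → ℂ) (hUnit : ∀ j k, ‖θ j k‖ = 1) (x : Fin n → ℤ)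
    (h : Ltwo n) : Memℓp (fun y => coc θ x (y - x) * h (y - x)) 2 := by
  apply memℓp_gen
  have hs : Summable (fun z : Fin n → ℤ => ‖(h : (Fin n → ℤ) → ℂ) z‖ ^ (2:ℝ≥0∞).toReal) :=
    (memℓp_gen_iff (by rw [two_toReal]; norm_num)).mp (lp.memℓp h)
  have := ((Equiv.subRight x).summable_iff
    (f := fun z : Fin n → ℤ => ‖(h : (Fin n → ℤ) → ℂ) z‖ ^ (2:ℝ≥0∞).toReal)).mpr hs
  refine this.congr fun y => ?_
  simp only [Function.comp, Equiv.subRight_apply]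
  rw [norm_mul, coc_norm θ hUnit, one_mul]

def Ulp {n : ℕ} (θ : Fin n → Fin n → ℂ) (hUnit : ∀ j k, ‖θ j k‖ = 1) (x : Fin n → ℤ)
    (h : Ltwo n) : Ltwo n := ⟨fun y => coc θ x (y - x) * h (y - x), Umem θ hUnit x h⟩

lemma Ulp_apply {n : ℕ} (θ : Fin n → Fin n → ℂ) (hUnit : ∀ j k, ‖θ j k‖ = 1) (x : Fin n → ℤ)
    (h : Ltwo n) (y : Fin n → ℤ) :
    (Ulp θ hUnit x h : (Fin n → ℤ) → ℂ) y = coc θ x (y - x) * h (y - x) := rfl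

lemma Ulp_norm {n : ℕ} (θ : Fin n → Fin n → ℂ) (hUnit : ∀ j k, ‖θ j k‖ = 1) (x : Fin n → ℤ)
    (h : Ltwo n) : ‖Ulp θ hUnit x h‖ = ‖h‖ := by
  have h2 : (0:ℝ) < (2 : ℝ≥0∞).toReal := by rw [two_toReal]; norm_num
  rw [lp.norm_eq_tsum_rpow h2, lp.norm_eq_tsum_rpow h2]
  congr 1
  have := (Equiv.subRight x).tsum_eq
    (f := fun z : Fin n → ℤ => ‖(h : (Fin n → ℤ) → ℂ) z‖ ^ (2:ℝ≥0∞).toReal)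
  rw [← this]
  apply tsum_congr
  intro y
  simp only [Equiv.subRight_apply, Ulp_apply]
  rw [norm_mul, coc_norm θ hUnit, one_mul]

def Uclm {n : ℕ} (θ : Fin n → Fin n → ℂ) (hUnit : ∀ j k, ‖θ j k‖ = 1) (x : Fin n → ℤ) :
    Ltwo n →L[ℂ] Ltwo n :=
  LinearMap.mkContinuous
    { toFun := Ulp θ hUnit x
      map_add' := fun h₁ h₂ => by
        apply Subtype.ext
        funext y
        show coc θ x (y - x) * (h₁ + h₂ : Ltwo n) (y - x)
          = (Ulp θ hUnit x h₁ + Ulp θ hUnit x h₂ : Ltwo n) y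
        rw [lp.coeFn_add, Pi.add_apply, lp.coeFn_add, Pi.add_apply, Ulp_apply, Ulp_apply]
        ring
      map_smul' := fun a h => by
        apply Subtype.ext
        funext y
        show coc θ x (y - x) * (a • h : Ltwo n) (y - x) = (a • Ulp θ hUnit x h : Ltwo n) y
        rw [lp.coeFn_smul, Pi.smul_apply, lp.coeFn_smul, Pi.smul_apply, Ulp_apply,
          smul_eq_mul, smul_eq_mul]
        ring }
    1 (fun h => by rw [one_mul]; exact le_of_eq (Ulp_norm θ hUnit x h))

lemma Uclm_apply {n : ℕ} (θ : Fin n → Fin n → ℂ) (hUnit : ∀ j k, ‖θ j k‖ = 1) (x : Fin n → ℤ)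
    (h : Ltwo n) (y : Fin n → ℤ) :
    (Uclm θ hUnit x h : (Fin n → ℤ) → ℂ) y = coc θ x (y - x) * h (y - x) := rfl

lemma Uclm_norm_le {n : ℕ} (θ : Fin n → Fin n → ℂ) (hUnit : ∀ j k, ‖θ j k‖ = 1)
    (x : Fin n → ℤ) : ‖Uclm θ hUnit x‖ ≤ 1 :=
  LinearMap.mkContinuous_norm_le _ zero_le_one _

/-- if the submultiplicative symmetric weight v violates the
GRS-condition (there is x with lim_m v(mx)^{1/m} > 1), then ℓ¹_v(ℤⁿ, θ) is not
inverse-closed in C*(θ): some f ∈ ℓ¹_v has λ(f) invertible as a bounded operator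
on ℓ²(ℤⁿ) but has no two-sided ♮-inverse in ℓ¹_v. -/
theorem statement8 {n : ℕ} (θ : Fin n → Fin n → ℂ)
    (hUnit : ∀ j k, ‖θ j k‖ = 1)
    (hHerm : ∀ j k, θ k j = starRingEnd ℂ (θ j k))
    (hDiag : ∀ j, θ j j = 1)
    (v : (Fin n → ℤ) → ℝ)
    (hv1 : ∀ x, 1 ≤ v x)
    (hvsub : ∀ x y, v (x + y) ≤ v x * v y)
    (hvsymm : ∀ x, v (-x) = v x)
    (hGRSfail : ∃ (x : Fin n → ℤ) (L : ℝ), 1 < L ∧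
      Filter.Tendsto (fun m : ℕ => (v (m • x)) ^ ((m : ℝ)⁻¹)) atTop (𝓝 L)) :
    ∃ f : (Fin n → ℤ) → ℂ, Summable (fun x => ‖f x‖ * v x) ∧
      (∃ T : Ltwo n ≃L[ℂ] Ltwo n,
        ∀ (h : Ltwo n) (x : Fin n → ℤ),
          (T h : (Fin n → ℤ) → ℂ) x = tconv (coc θ) f (⇑h) x) ∧
      ¬ ∃ g : (Fin n → ℤ) → ℂ, Summable (fun x => ‖g x‖ * v x) ∧
          tconv (coc θ) f g = delta 0 ∧ tconv (coc θ) g f = delta 0 := by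
  obtain ⟨x, L, hL1, hLlim⟩ := hGRSfail
  -- x ≠ 0
  have hx0 : x ≠ 0 := by
    rintro rfl
    have hv0 : (0:ℝ) < v 0 := lt_of_lt_of_le one_pos (hv1 0)
    have h1 : Tendsto (fun m : ℕ => (v (m • (0 : Fin n → ℤ))) ^ ((m:ℝ)⁻¹)) atTop (𝓝 1) := by
      have heq : ∀ m : ℕ, (v (m • (0:Fin n → ℤ))) ^ ((m:ℝ)⁻¹)
          = Real.exp ((m:ℝ)⁻¹ * Real.log (v 0)) := by
        intro m; rw [smul_zero, Real.rpow_def_of_pos hv0, mul_comm]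
      have h2 : Tendsto (fun m : ℕ => (m:ℝ)⁻¹ * Real.log (v 0)) atTop (𝓝 0) := by
        have := tendsto_inv_atTop_nhds_zero_nat.mul_const (Real.log (v 0))
        rwa [zero_mul] at this
      have h3 := (Real.continuous_exp.tendsto 0).comp h2
      rw [Real.exp_zero] at h3
      exact h3.congr fun m => (heq m).symm
    exact absurd (tendsto_nhds_unique hLlim h1) (by linarith)
  obtain ⟨i, hxi⟩ := Function.ne_iff.mp hx0
  have hxi : x i ≠ 0 := hxi
  have hinj : Function.Injective (fun m : ℕ => m • x) := by
    intro a b hab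
    have h1 := congrFun hab i
    simp only [Pi.smul_apply, nsmul_eq_mul] at h1
    have := mul_right_cancel₀ hxi h1
    exact_mod_cast this
  have hL0 : (0:ℝ) < L := by linarith
  set c : ℝ := (1 + L⁻¹)/2 with hc_def
  have hc0 : 0 < c := by positivity
  have hc1 : c < 1 := by
    have : L⁻¹ < 1 := inv_lt_one_of_one_lt₀ hL1
    rw [hc_def]; linarith
  have hcL : 1 < c * L := by
    have hce : c * L = (L + 1)/2 := by rw [hc_def]; field_simp
    rw [hce]; linarith
  have hcL' : 1 < c⁻¹ * L := by
    have hcl : c < L := lt_trans hc1 hL1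
    calc (1:ℝ) = c⁻¹ * c := (inv_mul_cancel₀ hc0.ne').symm
    _ < c⁻¹ * L := mul_lt_mul_of_pos_left hcl (by positivity)
  refine ⟨fun y => delta 0 y - ((c:ℝ):ℂ) * delta x y, ?_, ?_, ?_⟩
  · -- summability of the weighted norm of f
    apply summable_of_ne_finset_zero (s := ({0, x} : Finset (Fin n → ℤ)))
    intro b hb
    simp only [Finset.mem_insert, Finset.mem_singleton, not_or] at hb
    simp [delta, if_neg hb.1, if_neg hb.2]
  · -- invertibility on ℓ²
    have hnorm : ‖((c:ℝ):ℂ) • Uclm θ hUnit x‖ < 1 := by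
      calc ‖((c:ℝ):ℂ) • Uclm θ hUnit x‖ ≤ ‖((c:ℝ):ℂ)‖ * ‖Uclm θ hUnit x‖ :=
        ContinuousLinearMap.opNorm_smul_le _ _
      _ ≤ ‖((c:ℝ):ℂ)‖ * 1 := by gcongr; exact Uclm_norm_le θ hUnit x
      _ = c := by rw [mul_one, Complex.norm_real, Real.norm_eq_abs, abs_of_pos hc0]
      _ < 1 := hc1
    set u : (Ltwo n →L[ℂ] Ltwo n)ˣ := Units.oneSub _ hnorm with hu_def
    refine ⟨ContinuousLinearEquiv.equivOfInverse u.val u.inv ?_ ?_, ?_⟩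
    · intro h
      rw [← ContinuousLinearMap.mul_apply, u.inv_val, ContinuousLinearMap.one_apply]
    · intro h
      rw [← ContinuousLinearMap.mul_apply, u.val_inv, ContinuousLinearMap.one_apply]
    · intro h z
      rw [tconv_formula θ x hx0 _ _ z]
      show (u.val h : (Fin n → ℤ) → ℂ) z = _
      have hval : u.val h = h - ((c:ℝ):ℂ) • (Uclm θ hUnit x h) := by
        rw [hu_def, Units.val_oneSub, ContinuousLinearMap.sub_apply,
          ContinuousLinearMap.one_apply, ContinuousLinearMap.smul_apply]
      rw [hval, lp.coeFn_sub, Pi.sub_apply, lp.coeFn_smul, Pi.smul_apply,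
        Uclm_apply, smul_eq_mul]
  · -- no inverse in ℓ¹_v
    rintro ⟨g, hgsum, hfg, -⟩
    have key : ∀ z, g z - ((c:ℝ):ℂ) * (coc θ x (z - x) * g (z - x)) = delta 0 z := by
      intro z
      rw [← tconv_formula θ x hx0 _ g z]
      exact congrFun hfg z
    have keyne : ∀ z, z ≠ (0 : Fin n → ℤ) → ‖g z‖ = c * ‖g (z - x)‖ := by
      intro z hz
      have h1 := key z
      rw [delta, if_neg hz, sub_eq_zero] at h1
      rw [h1, norm_mul, norm_mul, coc_norm θ hUnit, one_mul, Complex.norm_real, Real.norm_eq_abs,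
        abs_of_pos hc0]
    have hsmulne : ∀ m : ℕ, (m + 1) • x ≠ 0 := by
      intro m hm
      have h1 := congrFun hm i
      simp only [Pi.smul_apply, nsmul_eq_mul, Pi.zero_apply] at h1
      rcases mul_eq_zero.mp h1 with h | h
      · exact absurd h (by positivity)
      · exact hxi h
    have hfwd : ∀ m : ℕ, ‖g (m • x)‖ = c ^ m * ‖g 0‖ := by
      intro m
      induction m with
      | zero => simp [zero_nsmul]
      | succ k ih =>
        have h1 := keyne ((k+1) • x) (hsmulne k)
        rw [succ_nsmul, add_sub_cancel_right] at h1
        rw [succ_nsmul, h1, ih]; ring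
    have hsum1 : Summable (fun m : ℕ => ‖g (m • x)‖ * v (m • x)) :=
      hgsum.comp_injective hinj
    by_cases hg0 : g 0 = 0
    · -- backward recursion
      have hb1 : ‖g (-x)‖ = c⁻¹ := by
        have h1 := key 0
        rw [hg0, zero_sub] at h1
        have hd : delta (0 : Fin n → ℤ) (0 : Fin n → ℤ) = 1 := by simp [delta]
        rw [hd] at h1
        have h2 : ((c:ℝ):ℂ) * (coc θ x (-x) * g (-x)) = -1 := by
          have h1' := h1
          rw [zero_sub] at h1'
          linear_combination -h1'
        have h3 := congrArg norm h2
        rw [norm_mul, norm_mul, coc_norm θ hUnit, one_mul, Complex.norm_real, Real.norm_eq_abs,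
          abs_of_pos hc0, norm_neg, norm_one] at h3
        exact eq_inv_of_mul_eq_one_left (by linarith [h3] : ‖g (-x)‖ * c = 1)
      have hbwd : ∀ m : ℕ, ‖g (-((m+1) • x))‖ = (c⁻¹) ^ (m+1) := by
        intro m
        induction m with
        | zero => simpa [one_nsmul] using hb1
        | succ k ih =>
          have hne : -((k+1) • x) ≠ (0 : Fin n → ℤ) := fun hh =>
            hsmulne k (by rwa [neg_eq_zero] at hh)
          have h1 := keyne _ hne
          have h2 : -((k+1) • x) - x = -((k+1+1) • x) := by
            rw [succ_nsmul x (k+1)]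
            abel
          rw [h2, ih] at h1
          have hgk : ‖g (-((k+1+1) • x))‖ = (c⁻¹)^(k+1) / c := by
            rw [eq_div_iff hc0.ne']
            linarith [h1]
          rw [hgk, pow_succ]
          field_simp
          rw [show c ^ 2 * (1 / c) ^ (k + 1 + 1) = (1 / c) ^ k * (c * (1 / c)) ^ 2 by ring,
            mul_one_div_cancel hc0.ne', one_pow, mul_one]
      have hinj2 : Function.Injective (fun m : ℕ => -((m+1) • x)) := by
        intro a b hab
        simp only at hab
        have h1 := neg_injective hab
        have h2 := hinj h1
        omega
      have hsum2 : Summable (fun m : ℕ => ‖g (-((m+1) • x))‖ * v (-((m+1) • x))) :=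
        hgsum.comp_injective hinj2
      have hsum3 : Summable (fun m : ℕ => (c⁻¹) ^ (m+1) * v ((m+1) • x)) := by
        refine hsum2.congr fun m => ?_
        rw [hbwd, hvsymm]
      have htend : Tendsto (fun m : ℕ => (c⁻¹) ^ m * v (m • x)) atTop (𝓝 0) := by
        rw [← tendsto_add_atTop_iff_nat 1]
        exact hsum3.tendsto_atTop_zero
      exact root_no_zero (fun m => hv1 _) hLlim (by positivity) hcL' htend
    · -- forward recursion
      have hg0' : (0:ℝ) < ‖g 0‖ := norm_pos_iff.mpr hg0
      have htt := hsum1.tendsto_atTop_zero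
      have htend : Tendsto (fun m : ℕ => c ^ m * v (m • x)) atTop (𝓝 0) := by
        have h2 := htt.mul_const (‖g 0‖⁻¹)
        rw [zero_mul] at h2
        refine h2.congr fun m => ?_
        calc ‖g (m • x)‖ * v (m • x) * ‖g 0‖⁻¹
            = (c ^ m * ‖g 0‖) * v (m • x) * ‖g 0‖⁻¹ := by rw [hfwd]
          _ = c ^ m * v (m • x) * (‖g 0‖ * ‖g 0‖⁻¹) := by ring
          _ = c ^ m * v (m • x) := by rw [mul_inv_cancel₀ hg0'.ne', mul_one]
      exact root_no_zero (fun m => hv1 _) hLlim hc0 hcL htend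
end
end

section
/- Let m ∈ ℤⁿ and let e_1, …, e_n be the standard basis of ℤⁿ. The following are equivalent: (i) δ_m is central in ℓ¹(ℤⁿ, θ), i.e. δ_m ♮ f = f ♮ δ_m for all f ∈ ℓ¹(ℤⁿ); (ii) σ(m, e_j) = σ(e_j, m) for every j = 1, …, n; (iii) ∏_{j=1}^n θ_{jk}^{m_j} = 1 for every k = 1, …, n. -/
open scoped BigOperators
open Filter Topology

noncomputable section

lemma key {n : ℕ} (θ : Fin n → Fin n → ℂ)
    (hne : ∀ j k, θ j k ≠ 0)
    (hinv : ∀ j k, θ j k * θ k j = 1)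
    (hDiag : ∀ j, θ j j = 1)
    (m z : Fin n → ℤ) :
    coc θ m z * (coc θ z m)⁻¹ = ∏ j, (∏ k, θ k j ^ (m k)) ^ (z j) := by
  classical
  set S := Finset.univ.filter (fun p : Fin n × Fin n => p.1 < p.2) with hS
  set S' := Finset.univ.filter (fun p : Fin n × Fin n => p.2 < p.1) with hS'
  have h1 : (coc θ z m)⁻¹ = ∏ p ∈ S', θ p.2 p.1 ^ (m p.2 * z p.1) := by
    rw [coc, ← Finset.prod_inv_distrib]
    refine Finset.prod_nbij' Prod.swap Prod.swap ?_ ?_ ?_ ?_ ?_ <;>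
      simp only [hS, hS', Finset.mem_filter, Finset.mem_univ, true_and, Prod.fst_swap,
        Prod.snd_swap, Prod.swap_swap]
    · intro p hp; exact hp
    · intro p hp; exact hp
    · intro p _; trivial
    · intro p _; trivial
    · intro p _
      have hi : (θ p.2 p.1)⁻¹ = θ p.1 p.2 := inv_eq_of_mul_eq_one_right (hinv p.2 p.1)
      rw [← inv_zpow, hi, mul_comm (z p.2) (m p.1)]
  rw [coc, h1]
  have hdisj : Disjoint S S' := by
    rw [Finset.disjoint_left]
    intro p hp hp'
    simp only [hS, hS', Finset.mem_filter] at hp hp'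
    exact absurd (hp.2.trans hp'.2) (lt_irrefl _)
  rw [← Finset.prod_union hdisj]
  have hsub : S ∪ S' ⊆ Finset.univ := Finset.subset_univ _
  have hext : ∏ p ∈ S ∪ S', θ p.2 p.1 ^ (m p.2 * z p.1)
      = ∏ p : Fin n × Fin n, θ p.2 p.1 ^ (m p.2 * z p.1) := by
    refine Finset.prod_subset hsub ?_
    intro p _ hp
    simp only [hS, hS', Finset.mem_union, Finset.mem_filter, Finset.mem_univ, true_and,
      not_or] at hp
    have : p.1 = p.2 := le_antisymm (not_lt.mp hp.2) (not_lt.mp hp.1)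
    rw [← this, hDiag, one_zpow]
  rw [hext, Fintype.prod_prod_type]
  refine Finset.prod_congr rfl fun j _ => ?_
  rw [← Finset.prod_zpow]
  refine Finset.prod_congr rfl fun k _ => ?_
  rw [← zpow_mul]


lemma coc_ne_zero {n : ℕ} (θ : Fin n → Fin n → ℂ) (hne : ∀ j k, θ j k ≠ 0)
    (l m : Fin n → ℤ) : coc θ l m ≠ 0 := by
  rw [coc]
  exact Finset.prod_ne_zero_iff.mpr fun p _ => zpow_ne_zero _ (hne p.2 p.1)

lemma tconv_delta_left {n : ℕ} (σ : (Fin n → ℤ) → (Fin n → ℤ) → ℂ) (m : Fin n → ℤ)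
    (f : (Fin n → ℤ) → ℂ) (x : Fin n → ℤ) :
    tconv σ (delta m) f x = f (x - m) * σ m (x - m) := by
  rw [tconv]
  rw [tsum_eq_single m (fun y hy => by simp [delta, hy])]
  simp [delta]

lemma tconv_delta_right {n : ℕ} (σ : (Fin n → ℤ) → (Fin n → ℤ) → ℂ) (m : Fin n → ℤ)
    (f : (Fin n → ℤ) → ℂ) (x : Fin n → ℤ) :
    tconv σ f (delta m) x = f (x - m) * σ (x - m) m := by
  rw [tconv]
  rw [tsum_eq_single (x - m) (fun y hy => by
    have : x - y ≠ m := fun h => hy (by rw [← h]; abel)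
    simp [delta, this])]
  simp [delta]

lemma delta_summable {n : ℕ} (z : Fin n → ℤ) : Summable (fun x => ‖delta z x‖) := by
  apply summable_of_ne_finset_zero (s := {z})
  intro x hx
  simp only [Finset.mem_singleton] at hx
  simp [delta, hx]

/-- for m ∈ ℤⁿ the following are equivalent:
(i) δ_m is central in ℓ¹(ℤⁿ, θ);
(ii) σ(m, e_j) = σ(e_j, m) for all j;
(iii) ∏_{j=1}^n θ_{jk}^{m_j} = 1 for all k. -/
theorem statement10 {n : ℕ} (θ : Fin n → Fin n → ℂ)
    (hUnit : ∀ j k, ‖θ j k‖ = 1)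
    (hHerm : ∀ j k, θ k j = starRingEnd ℂ (θ j k))
    (hDiag : ∀ j, θ j j = 1)
    (m : Fin n → ℤ) :
    ((∀ f : (Fin n → ℤ) → ℂ, Summable (fun x => ‖f x‖) →
        tconv (coc θ) (delta m) f = tconv (coc θ) f (delta m))
      ↔ (∀ j : Fin n,
          coc θ m (Pi.single j (1 : ℤ)) = coc θ (Pi.single j (1 : ℤ)) m)) ∧
    ((∀ j : Fin n,
        coc θ m (Pi.single j (1 : ℤ)) = coc θ (Pi.single j (1 : ℤ)) m)
      ↔ (∀ k : Fin n, (∏ j : Fin n, θ j k ^ (m j)) = 1)) := by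
  have hne : ∀ j k, θ j k ≠ 0 := fun j k => by
    intro h; have := hUnit j k; rw [h] at this; simp at this
  have hinv : ∀ j k, θ j k * θ k j = 1 := by
    intro j k
    rw [hHerm j k, Complex.mul_conj]
    norm_cast
    rw [Complex.normSq_eq_norm_sq, hUnit]
    norm_num
  -- (ii) ↔ (iii)
  have hB : (∀ j : Fin n,
        coc θ m (Pi.single j (1 : ℤ)) = coc θ (Pi.single j (1 : ℤ)) m)
      ↔ (∀ k : Fin n, (∏ j : Fin n, θ j k ^ (m j)) = 1) := by
    constructor
    · intro h k
      have hk := key θ hne hinv hDiag m (Pi.single k 1)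
      rw [h k, mul_inv_cancel₀ (coc_ne_zero θ hne _ _)] at hk
      rw [Finset.prod_eq_single k (fun j _ hj => by simp [Pi.single_apply, hj])
        (by simp)] at hk
      simpa using hk.symm
    · intro h j
      have hk := key θ hne hinv hDiag m (Pi.single j 1)
      have h1 : (∏ i : Fin n, (∏ k : Fin n, θ k i ^ (m k)) ^ ((Pi.single j (1:ℤ) : Fin n → ℤ) i)) = 1 := by
        refine Finset.prod_eq_one fun i _ => ?_
        rw [h i]
        exact one_zpow _
      rw [h1] at hk
      have h2 := coc_ne_zero θ hne (Pi.single j (1:ℤ)) m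
      field_simp at hk
      exact hk
  refine ⟨?_, hB⟩
  constructor
  · intro h j
    have := congrFun (h (delta (Pi.single j 1)) (delta_summable _)) (Pi.single j 1 + m)
    rw [tconv_delta_left, tconv_delta_right] at this
    simp only [add_sub_cancel_right] at this
    simpa [delta] using this
  · intro h f _
    have h3 : ∀ z, coc θ m z = coc θ z m := by
      intro z
      have hk := key θ hne hinv hDiag m z
      have h1 : (∏ i : Fin n, (∏ k : Fin n, θ k i ^ (m k)) ^ (z i)) = 1 := by
        refine Finset.prod_eq_one fun i _ => ?_
        rw [hB.mp h i]
        exact one_zpow _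
      rw [h1] at hk
      have h2 := coc_ne_zero θ hne z m
      field_simp at hk
      exact hk
    funext x
    rw [tconv_delta_left, tconv_delta_right, h3]
end
end
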